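/- arXiv:2510.20883 — 4 statements merged into one kernel-verified Lean document; each statement's English description precedes it below -/
import Mathlib

section
/- Let H be a real Hilbert space, φ(x) ∈ H a fixed vector, f ∈ H, y ∈ ℝ, and δ ≥ 0. Then the supremum over d ∈ H with ‖d‖_H ≤ δ of (y − ⟨f, φ(x) + d⟩_H)² equals (|y − ⟨f, φ(x)⟩_H| + δ‖f‖_H)². -/
/-- Closed formula for the inner maximization: the supremum of the feature-perturbed
squared loss over perturbations of RKHS norm at most `δ` equals
`(|y - ⟨f, φ x⟩| + δ‖f‖)²`. -/
theorem adversarial_inner_maximization_closed_form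
    {H X : Type*} [NormedAddCommGroup H] [InnerProductSpace ℝ H]
    (φ : X → H) (f : H) (y δ : ℝ) (hδ : 0 ≤ δ) (x : X) :
    sSup ((fun d : H => (y - (inner ℝ f (φ x + d) : ℝ)) ^ 2) '' {d | ‖d‖ ≤ δ}) =
      (|y - (inner ℝ f (φ x) : ℝ)| + δ * ‖f‖) ^ 2 := by
  set a : ℝ := y - (inner ℝ f (φ x) : ℝ) with ha
  apply IsGreatest.csSup_eq
  constructor
  · by_cases hf : f = 0
    · refine ⟨0, by simpa using hδ, ?_⟩
      simp [hf, ha]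
    · have hfn : (0:ℝ) < ‖f‖ := norm_pos_iff.mpr hf
      set s : ℝ := if 0 ≤ a then 1 else -1 with hs
      have hsabs : |s| = 1 := by
        rcases le_or_gt 0 a with h | h
        · simp [hs, h]
        · simp [hs, not_le.mpr h]
      refine ⟨(-(s * δ / ‖f‖)) • f, ?_, ?_⟩
      · show ‖(-(s * δ / ‖f‖)) • f‖ ≤ δ
        rw [norm_smul]
        simp only [norm_neg, Real.norm_eq_abs, abs_div, abs_mul, hsabs, abs_norm,
          abs_of_nonneg hδ, one_mul]
        rw [div_mul_cancel₀ _ hfn.ne']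
      · have hinner : (inner ℝ f ((-(s * δ / ‖f‖)) • f) : ℝ) = -(s * δ * ‖f‖) := by
          rw [real_inner_smul_right, real_inner_self_eq_norm_sq]
          field_simp
        show (y - (inner ℝ f (φ x + (-(s * δ / ‖f‖)) • f) : ℝ)) ^ 2 = (|a| + δ * ‖f‖) ^ 2
        rw [inner_add_right, hinner]
        have : y - ((inner ℝ f (φ x) : ℝ) + -(s * δ * ‖f‖)) = a + s * (δ * ‖f‖) := by
          rw [ha]; ring
        rw [this]
        rcases le_or_gt 0 a with h | h
        · have : s = 1 := by simp [hs, h]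
          rw [this, abs_of_nonneg h]; ring
        · have : s = -1 := by simp [hs, h.not_ge]
          rw [this, abs_of_neg h]; ring
  · rintro _ ⟨d, hd, rfl⟩
    have h1 : |y - (inner ℝ f (φ x + d) : ℝ)| ≤ |a| + δ * ‖f‖ := by
      rw [inner_add_right]
      have : y - ((inner ℝ f (φ x) : ℝ) + inner ℝ f d) = a - inner ℝ f d := by rw [ha]; ring
      rw [this]
      calc |a - (inner ℝ f d : ℝ)| ≤ |a| + |(inner ℝ f d : ℝ)| := abs_sub _ _
        _ ≤ |a| + δ * ‖f‖ := by
            have := abs_real_inner_le_norm f d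
            have h2 : ‖f‖ * ‖d‖ ≤ δ * ‖f‖ := by
              rw [mul_comm]
              exact mul_le_mul_of_nonneg_right hd (norm_nonneg f)
            linarith
    calc (y - (inner ℝ f (φ x + d) : ℝ)) ^ 2 = |y - (inner ℝ f (φ x + d) : ℝ)| ^ 2 := (sq_abs _).symm
      _ ≤ (|a| + δ * ‖f‖) ^ 2 := by
          apply pow_le_pow_left₀ (abs_nonneg _) h1
end

section
/- (Excess risk for kernel ridge regression.) Let f̂ be a minimizer over H of the kernel ridge regression objective L(f) = (1/n)·Σ_{i=1}^n (y_i − ⟨f, φ(x_i)⟩_H)² + λ‖f‖_H² with regularization parameter λ > 0, and assume ‖f*‖_H > 0. Then the in-sample excess risk satisfies E(f̂ − f*) ≤ min(B_γ, B_β), where B_γ = 2(Rλ + σγ)²/λ and B_β = 2(R²λ + σ²β²). -/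
private lemma krr_aux1 (E t lam R σ γ : ℝ) (hlam : 0 < lam)
    (hchain : E ≤ 2 * (σ * γ + R * lam) * t - lam * t ^ 2) :
    E * lam ≤ 2 * (R * lam + σ * γ) ^ 2 := by
  nlinarith [hchain, sq_nonneg (lam * t - (R * lam + σ * γ)), sq_nonneg (R * lam + σ * γ),
    mul_le_mul_of_nonneg_right hchain hlam.le]

private lemma krr_aux3 (v : ℝ) (h : v ^ 2 ≤ 1) : v ≤ 1 := by
  nlinarith [sq_nonneg (v - 1)]

private lemma krr_aux2 (E u c d : ℝ) (hd : 0 ≤ d) (hu2 : u ^ 2 = E)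
    (hkey : (3/4) * u ^ 2 ≤ c * u + d / 2) :
    E ≤ 2 * (d + c ^ 2) := by
  nlinarith [hkey, sq_nonneg (u - (4/3) * c), sq_nonneg c, hd, hu2]

set_option maxHeartbeats 2000000 in
/-- Excess risk for kernel ridge regression: if `fhat` minimizes the ridge objective
`(1/n) Σᵢ (yᵢ - ⟨f, φ(xᵢ)⟩)² + λ‖f‖²`, then the in-sample excess risk is bounded by
`min(2(Rλ + σγ)²/λ, 2(R²λ + σ²β²))`. -/
theorem kernel_ridge_regression_excess_risk
    {H X : Type*} [NormedAddCommGroup H] [InnerProductSpace ℝ H]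
    (φ : X → H) (n : ℕ) (hn : 0 < n) (x : Fin n → X) (w : Fin n → ℝ)
    (hw : (1 / (n : ℝ)) * ∑ i, (w i) ^ 2 = 1)
    (fstar : H) (σ : ℝ) (hσ : 0 ≤ σ)
    (y : Fin n → ℝ) (hy : ∀ i, y i = (inner ℝ fstar (φ (x i)) : ℝ) + σ * w i)
    (R : ℝ) (hR : R = ‖fstar‖) (hRpos : 0 < ‖fstar‖)
    (lam : ℝ) (hlam : 0 < lam)
    (γ : ℝ)
    (hγ : γ = sSup {t : ℝ | ∃ g : H, ‖g‖ ≤ 1 ∧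
      t = (1 / (n : ℝ)) * ∑ i, w i * (inner ℝ g (φ (x i)) : ℝ)})
    (β : ℝ)
    (hβ : β = sSup {t : ℝ | ∃ g : H,
      (1 / (n : ℝ)) * ∑ i, (inner ℝ g (φ (x i)) : ℝ) ^ 2 ≤ 1 ∧
      t = (1 / (n : ℝ)) * ∑ i, w i * (inner ℝ g (φ (x i)) : ℝ)})
    (fhat : H)
    (hmin : ∀ g : H,
      (1 / (n : ℝ)) * ∑ i, (y i - (inner ℝ fhat (φ (x i)) : ℝ)) ^ 2 + lam * ‖fhat‖ ^ 2 ≤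
      (1 / (n : ℝ)) * ∑ i, (y i - (inner ℝ g (φ (x i)) : ℝ)) ^ 2 + lam * ‖g‖ ^ 2) :
    (1 / (n : ℝ)) * ∑ i, (inner ℝ (fhat - fstar) (φ (x i)) : ℝ) ^ 2 ≤
      min (2 * (R * lam + σ * γ) ^ 2 / lam)
        (2 * (R ^ 2 * lam + σ ^ 2 * β ^ 2)) := by
  classical
  have hn' : (0:ℝ) < n := by exact_mod_cast hn
  set E : ℝ := (1 / (n : ℝ)) * ∑ i, (inner ℝ (fhat - fstar) (φ (x i)) : ℝ) ^ 2 with hEdef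
  set S : ℝ := (1 / (n : ℝ)) * ∑ i, w i * (inner ℝ (fhat - fstar) (φ (x i)) : ℝ) with hSdef
  clear_value E S
  -- key expansion of the loss
  have key : ∀ g : H, (1 / (n : ℝ)) * ∑ i, (y i - (inner ℝ g (φ (x i)) : ℝ)) ^ 2
      = σ ^ 2 - 2 * σ * ((1 / (n : ℝ)) * ∑ i, w i * (inner ℝ (g - fstar) (φ (x i)) : ℝ))
        + (1 / (n : ℝ)) * ∑ i, (inner ℝ (g - fstar) (φ (x i)) : ℝ) ^ 2 := by
    intro g
    have h1 : ∑ i, (y i - (inner ℝ g (φ (x i)) : ℝ)) ^ 2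
        = σ ^ 2 * ∑ i, (w i) ^ 2 - 2 * σ * ∑ i, w i * (inner ℝ (g - fstar) (φ (x i)) : ℝ)
          + ∑ i, (inner ℝ (g - fstar) (φ (x i)) : ℝ) ^ 2 := by
      rw [Finset.mul_sum, Finset.mul_sum, ← Finset.sum_sub_distrib, ← Finset.sum_add_distrib]
      refine Finset.sum_congr rfl fun i _ => ?_
      rw [hy i, inner_sub_left]
      ring
    rw [h1]
    linear_combination σ ^ 2 * hw
  -- basic inequality with g = fstar
  have hA : E + lam * ‖fhat‖ ^ 2 ≤ 2 * σ * S + lam * ‖fstar‖ ^ 2 := by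
    have h := hmin fstar
    rw [key fhat, key fstar, ← hSdef, ← hEdef] at h
    simp only [sub_self, inner_zero_left] at h
    norm_num at h
    linarith [h]
  -- basic inequality with the midpoint
  have hB : E + lam * ‖fhat‖ ^ 2 ≤ σ * S + (1/4) * E
      + lam * ‖fstar + (2:ℝ)⁻¹ • (fhat - fstar)‖ ^ 2 := by
    have h := hmin (fstar + (2:ℝ)⁻¹ • (fhat - fstar))
    rw [key fhat, key (fstar + (2:ℝ)⁻¹ • (fhat - fstar)), ← hSdef, ← hEdef] at h
    have hc : ∀ i : Fin n,
        (inner ℝ (fstar + (2:ℝ)⁻¹ • (fhat - fstar) - fstar) (φ (x i)) : ℝ)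
        = 2⁻¹ * (inner ℝ (fhat - fstar) (φ (x i)) : ℝ) := by
      intro i
      rw [add_sub_cancel_left, real_inner_smul_left]
    have hsum1 : (1 / (n : ℝ)) *
        ∑ i, w i * (inner ℝ (fstar + (2:ℝ)⁻¹ • (fhat - fstar) - fstar) (φ (x i)) : ℝ)
        = 2⁻¹ * S := by
      rw [hSdef, Finset.mul_sum, Finset.mul_sum, Finset.mul_sum]
      refine Finset.sum_congr rfl fun i _ => ?_
      rw [hc i]; ring
    have hsum2 : (1 / (n : ℝ)) *
        ∑ i, (inner ℝ (fstar + (2:ℝ)⁻¹ • (fhat - fstar) - fstar) (φ (x i)) : ℝ) ^ 2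
        = 4⁻¹ * E := by
      rw [hEdef, Finset.mul_sum, Finset.mul_sum, Finset.mul_sum]
      refine Finset.sum_congr rfl fun i _ => ?_
      rw [hc i]; ring
    rw [hsum1, hsum2] at h
    linarith [h]
  -- norm expansions
  have hfhat_eq : fhat = fstar + (fhat - fstar) := by abel
  have hnorm1 : ‖fhat‖ ^ 2 = ‖fstar‖ ^ 2 + 2 * (inner ℝ fstar (fhat - fstar) : ℝ)
      + ‖fhat - fstar‖ ^ 2 := by
    conv_lhs => rw [hfhat_eq]
    rw [@norm_add_sq_real]
  have hnorm2 : ‖fstar + (2:ℝ)⁻¹ • (fhat - fstar)‖ ^ 2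
      = ‖fstar‖ ^ 2 + (inner ℝ fstar (fhat - fstar) : ℝ) + (1/4) * ‖fhat - fstar‖ ^ 2 := by
    rw [@norm_add_sq_real, real_inner_smul_right, norm_smul]
    simp [norm_inv]
    ring
  set q : ℝ := (inner ℝ fstar (fhat - fstar) : ℝ) with hq
  set t : ℝ := ‖fhat - fstar‖ with ht
  clear_value q t
  have ht0 : 0 ≤ t := ht ▸ norm_nonneg _
  have hE0 : 0 ≤ E := by
    rw [hEdef]
    positivity
  have hqCS : -(‖fstar‖ * t) ≤ q := by
    have h1 := abs_real_inner_le_norm fstar (fhat - fstar)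
    have h2 := neg_abs_le (inner ℝ fstar (fhat - fstar) : ℝ)
    rw [ht]; linarith
  have hlamnorm1 : lam * ‖fhat‖ ^ 2 = lam * (‖fstar‖ ^ 2 + 2 * q + t ^ 2) := by rw [hnorm1]
  have hlamnorm2 : lam * ‖fstar + (2:ℝ)⁻¹ • (fhat - fstar)‖ ^ 2
      = lam * (‖fstar‖ ^ 2 + q + (1/4) * t ^ 2) := by rw [hnorm2]
  have hfhatsq : (0:ℝ) ≤ ‖fstar‖ ^ 2 + 2 * q + t ^ 2 := by
    rw [← hnorm1]; positivity
  -- hA' : E ≤ 2σS - lam(2q + t²)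
  have hA' : E ≤ 2 * σ * S - lam * (2 * q + t ^ 2) := by
    linarith [hA, hlamnorm1]
  -- hB' : (3/4) E ≤ σ S + lam ‖fstar‖²/2
  have hB' : (3/4) * E ≤ σ * S + lam * ‖fstar‖ ^ 2 / 2 := by
    have h3 : 0 ≤ lam * (‖fstar‖ ^ 2 + 2 * q + t ^ 2) := mul_nonneg hlam.le hfhatsq
    have h4 : 0 ≤ lam * t ^ 2 := by positivity
    linarith [hB, hlamnorm1, hlamnorm2]
  -- gamma bound on S
  have hSγ : S ≤ γ * t := by
    rcases eq_or_ne (fhat - fstar) 0 with h0 | h0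
    · have hS0 : S = 0 := by
        rw [hSdef, h0]
        simp
      have ht0' : t = 0 := by rw [ht, h0, norm_zero]
      rw [hS0, ht0', mul_zero]
    · have htpos : 0 < t := by
        rw [ht]; exact norm_pos_iff.mpr h0
      have hbdd : BddAbove {u : ℝ | ∃ g : H, ‖g‖ ≤ 1 ∧
          u = (1 / (n : ℝ)) * ∑ i, w i * (inner ℝ g (φ (x i)) : ℝ)} := by
        refine ⟨(1 / (n : ℝ)) * ∑ i, |w i| * ‖φ (x i)‖, ?_⟩
        rintro u ⟨g, hg, rfl⟩
        have : ∑ i, w i * (inner ℝ g (φ (x i)) : ℝ) ≤ ∑ i, |w i| * ‖φ (x i)‖ := by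
          refine Finset.sum_le_sum fun i _ => ?_
          calc w i * (inner ℝ g (φ (x i)) : ℝ) ≤ |w i * (inner ℝ g (φ (x i)) : ℝ)| := le_abs_self _
            _ = |w i| * |(inner ℝ g (φ (x i)) : ℝ)| := abs_mul _ _
            _ ≤ |w i| * (‖g‖ * ‖φ (x i)‖) := by
                exact mul_le_mul_of_nonneg_left (abs_real_inner_le_norm _ _) (abs_nonneg _)
            _ ≤ |w i| * (1 * ‖φ (x i)‖) := by
                have := mul_le_mul_of_nonneg_right hg (norm_nonneg (φ (x i)))
                exact mul_le_mul_of_nonneg_left this (abs_nonneg _)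
            _ = |w i| * ‖φ (x i)‖ := by ring
        have h1n : (0:ℝ) ≤ 1 / (n:ℝ) := by positivity
        exact mul_le_mul_of_nonneg_left this h1n
      have hmem : t⁻¹ * S ∈ {u : ℝ | ∃ g : H, ‖g‖ ≤ 1 ∧
          u = (1 / (n : ℝ)) * ∑ i, w i * (inner ℝ g (φ (x i)) : ℝ)} := by
        refine ⟨t⁻¹ • (fhat - fstar), ?_, ?_⟩
        · rw [norm_smul, norm_inv, Real.norm_eq_abs, abs_of_pos htpos, ← ht,
            inv_mul_cancel₀ (ne_of_gt htpos)]
        · rw [hSdef, Finset.mul_sum, Finset.mul_sum, Finset.mul_sum]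
          refine Finset.sum_congr rfl fun i _ => ?_
          rw [real_inner_smul_left]
          ring
      have hle : t⁻¹ * S ≤ γ := by
        rw [hγ]; exact le_csSup hbdd hmem
      calc S = t * (t⁻¹ * S) := by field_simp
        _ ≤ t * γ := mul_le_mul_of_nonneg_left hle ht0
        _ = γ * t := mul_comm _ _
  -- first bound
  have bound1 : E ≤ 2 * (R * lam + σ * γ) ^ 2 / lam := by
    rw [le_div_iff₀ hlam]
    have hchain : E ≤ 2 * (σ * γ + R * lam) * t - lam * t ^ 2 := by
      have h1 : 2 * σ * S ≤ 2 * σ * (γ * t) := by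
        have := mul_le_mul_of_nonneg_left hSγ hσ
        linarith
      have h2 : -(lam * (2 * q)) ≤ 2 * lam * (R * t) := by
        have := mul_le_mul_of_nonneg_left hqCS hlam.le
        rw [hR]
        nlinarith [this]
      linarith [hA']
    exact krr_aux1 E t lam R σ γ hlam hchain
  -- beta bound
  set u : ℝ := Real.sqrt E with hu
  clear_value u
  have hu0 : 0 ≤ u := hu ▸ Real.sqrt_nonneg _
  have hu2 : u ^ 2 = E := by rw [hu]; exact Real.sq_sqrt hE0
  have hSβ : σ * S ≤ σ * β * u := by
    rcases eq_or_lt_of_le hE0 with hE00 | hEpos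
    · -- E = 0, so every inner ℝ product is zero, so S = 0
      have hsum0 : ∑ i, (inner ℝ (fhat - fstar) (φ (x i)) : ℝ) ^ 2 = 0 := by
        have : (1 / (n:ℝ)) * ∑ i, (inner ℝ (fhat - fstar) (φ (x i)) : ℝ) ^ 2 = 0 := by
          rw [← hEdef]; exact hE00.symm
        have h1n : (1 / (n:ℝ)) ≠ 0 := by positivity
        exact (mul_eq_zero.mp this).resolve_left h1n
      have hzero : ∀ i ∈ Finset.univ, (inner ℝ (fhat - fstar) (φ (x i)) : ℝ) ^ 2 = 0 := by
        rw [← Finset.sum_eq_zero_iff_of_nonneg (fun i _ => sq_nonneg _)]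
        exact hsum0
      have hS0 : S = 0 := by
        rw [hSdef]
        have : ∀ i ∈ Finset.univ, w i * (inner ℝ (fhat - fstar) (φ (x i)) : ℝ) = 0 := by
          intro i hi
          have := hzero i hi
          have h0 : (inner ℝ (fhat - fstar) (φ (x i)) : ℝ) = 0 := by
            exact pow_eq_zero_iff (by norm_num) |>.mp this
          rw [h0, mul_zero]
        rw [Finset.sum_eq_zero this, mul_zero]
      have hu00 : u = 0 := by rw [hu, ← hE00, Real.sqrt_zero]
      rw [hS0, hu00, mul_zero, mul_zero]
    · have hupos : 0 < u := by rw [hu]; exact Real.sqrt_pos.mpr hEpos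
      have hbdd : BddAbove {v : ℝ | ∃ g : H,
          (1 / (n : ℝ)) * ∑ i, (inner ℝ g (φ (x i)) : ℝ) ^ 2 ≤ 1 ∧
          v = (1 / (n : ℝ)) * ∑ i, w i * (inner ℝ g (φ (x i)) : ℝ)} := by
        refine ⟨1, ?_⟩
        rintro v ⟨g, hg, rfl⟩
        have hCS := Finset.sum_mul_sq_le_sq_mul_sq Finset.univ w (fun i => (inner ℝ g (φ (x i)) : ℝ))
        have hv2 : ((1 / (n : ℝ)) * ∑ i, w i * (inner ℝ g (φ (x i)) : ℝ)) ^ 2 ≤ 1 := by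
          have h1 : ((1 / (n : ℝ)) * ∑ i, w i * (inner ℝ g (φ (x i)) : ℝ)) ^ 2
              = ((1 / (n:ℝ)) * ∑ i, (w i) ^ 2) *
                ((1 / (n:ℝ)) * ∑ i, (inner ℝ g (φ (x i)) : ℝ) ^ 2)
                + (1/(n:ℝ))^2 * ((∑ i, w i * (inner ℝ g (φ (x i)) : ℝ))^2
                  - (∑ i, (w i)^2) * (∑ i, (inner ℝ g (φ (x i)) : ℝ)^2)) := by ring
          rw [h1, hw, one_mul]
          have h2 : (1/(n:ℝ))^2 * ((∑ i, w i * (inner ℝ g (φ (x i)) : ℝ))^2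
              - (∑ i, (w i)^2) * (∑ i, (inner ℝ g (φ (x i)) : ℝ)^2)) ≤ 0 := by
            apply mul_nonpos_of_nonneg_of_nonpos
            · positivity
            · linarith [hCS]
          linarith [hg]
        exact krr_aux3 _ hv2
      have hmem : u⁻¹ * S ∈ {v : ℝ | ∃ g : H,
          (1 / (n : ℝ)) * ∑ i, (inner ℝ g (φ (x i)) : ℝ) ^ 2 ≤ 1 ∧
          v = (1 / (n : ℝ)) * ∑ i, w i * (inner ℝ g (φ (x i)) : ℝ)} := by
        refine ⟨u⁻¹ • (fhat - fstar), ?_, ?_⟩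
        · have heq : (1 / (n : ℝ)) * ∑ i, (inner ℝ (u⁻¹ • (fhat - fstar)) (φ (x i)) : ℝ) ^ 2
              = u⁻¹ ^ 2 * E := by
            rw [hEdef, Finset.mul_sum, Finset.mul_sum, Finset.mul_sum]
            refine Finset.sum_congr rfl fun i _ => ?_
            rw [real_inner_smul_left]
            ring
          rw [heq, ← hu2]
          rw [inv_pow, inv_mul_cancel₀ (by positivity : u ^ 2 ≠ 0)]
        · rw [hSdef, Finset.mul_sum, Finset.mul_sum, Finset.mul_sum]
          refine Finset.sum_congr rfl fun i _ => ?_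
          rw [real_inner_smul_left]
          ring
      have hle : u⁻¹ * S ≤ β := by
        rw [hβ]; exact le_csSup hbdd hmem
      have hSu : S ≤ β * u := by
        have := mul_le_mul_of_nonneg_left hle hu0
        calc S = u * (u⁻¹ * S) := by field_simp
          _ ≤ u * β := this
          _ = β * u := mul_comm _ _
      calc σ * S ≤ σ * (β * u) := mul_le_mul_of_nonneg_left hSu hσ
        _ = σ * β * u := by ring
  have bound2 : E ≤ 2 * (R ^ 2 * lam + σ ^ 2 * β ^ 2) := by
    have hkey : (3/4) * u ^ 2 ≤ (σ * β) * u + (R ^ 2 * lam) / 2 := by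
      rw [hu2, hR]
      linarith [hB', hSβ]
    have := krr_aux2 E u (σ * β) (R ^ 2 * lam) (by rw [hR]; positivity) hu2 hkey
    linarith [this]
  exact le_min bound1 bound2
end

section
/- (Kernel-distance ball for the polynomial kernel.) Let k(x, x') = (1 + xᵀx')ᵈ on ℝᵖ, with d a positive integer. Let x, x' ∈ ℝᵖ and δ > 0 satisfy δ² < k(x, x) + k(x', x') and k(x, x) + k(x', x') − 2k(x, x') ≤ δ². Then ‖x − x'‖₂ ≤ C·δ^{1/d}, where C = 2^{−1/(2d)}·√(2 + ‖x‖₂² + ‖x'‖₂²). -/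
lemma aux_pow (m c : ℝ) (hc : 0 ≤ c) (hcm : c ≤ m) :
    ∀ d : ℕ, m ^ d * (m - c) ≤ m ^ (d + 1) - c ^ (d + 1) := by
  intro d
  induction d with
  | zero => simp
  | succ n ih =>
    have hm : 0 ≤ m := hc.trans hcm
    have e1 : m ^ (n+1+1) - c ^ (n+1+1)
        = m * (m ^ (n+1) - c ^ (n+1)) + c ^ (n+1) * (m - c) := by ring
    have e2 : m ^ (n+1) * (m - c) = m * (m ^ n * (m - c)) := by ring
    rw [e1, e2]
    have h3 := mul_le_mul_of_nonneg_left ih hm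
    have h4 := mul_nonneg (pow_nonneg hc (n+1)) (sub_nonneg.2 hcm)
    linarith

lemma key_pow (m c : ℝ) (n : ℕ) (hm : 1 ≤ m) (hlo : 2 - m ≤ c) (hhi : c ≤ m) :
    (m - c) ^ (n+1) ≤ m ^ (n+1) * (m ^ (n+1) - c ^ (n+1)) := by
  have hm0 : (0:ℝ) ≤ m := by linarith
  rcases le_or_gt 0 c with hc | hc
  · have h1 : (m - c) ^ (n+1) ≤ m ^ n * (m - c) := by
      calc (m - c) ^ (n+1) = (m - c) ^ n * (m - c) := by ring
      _ ≤ m ^ n * (m - c) :=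
        mul_le_mul_of_nonneg_right
          (pow_le_pow_left₀ (by linarith) (by linarith) n) (by linarith)
    have h2 := aux_pow m c hc hhi n
    have h3 : (1:ℝ) ≤ m ^ (n+1) := one_le_pow₀ hm
    nlinarith [sub_nonneg.2 (pow_le_pow_left₀ hc hhi (n+1))]
  · -- c < 0, set e = -c
    have he0 : 0 ≤ -c := by linarith
    have hem : -c ≤ m - 2 := by linarith
    have hm2 : (2:ℝ) ≤ m := by nlinarith
    have hcd : c ^ (n+1) ≤ (-c) ^ (n+1) := by
      calc c ^ (n+1) ≤ |c ^ (n+1)| := le_abs_self _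
      _ = |c| ^ (n+1) := by rw [abs_pow]
      _ = (-c) ^ (n+1) := by rw [abs_of_nonpos hc.le]
    have h2 := aux_pow m (-c) he0 (by linarith) n
    -- m^(n+1) - (-c)^(n+1) ≥ m^n * (m - (-c)) ≥ 2 * m^n
    have h4 : 2 * m ^ n ≤ m ^ (n+1) - c ^ (n+1) := by
      have : m ^ n * 2 ≤ m ^ n * (m + c) :=
        mul_le_mul_of_nonneg_left (by linarith) (pow_nonneg hm0 n)
      nlinarith
    -- (m - c)^(n+1) ≤ (2*(m-1))^(n+1) = 2^(n+1)*(m-1)^(n+1) ≤ 2*m^n * m^(n+1)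
    have h5 : (m - c) ^ (n+1) ≤ 2 ^ (n+1) * (m - 1) ^ (n+1) := by
      rw [← mul_pow]
      exact pow_le_pow_left₀ (by linarith) (by linarith) (n+1)
    have h6 : (2:ℝ) ^ (n+1) * (m - 1) ^ (n+1) ≤ (2 * m ^ n) * m ^ (n+1) := by
      have ha : (2:ℝ) ^ (n+1) ≤ 2 * m ^ n := by
        calc (2:ℝ) ^ (n+1) = 2 * 2 ^ n := by ring
        _ ≤ 2 * m ^ n := by
          have := pow_le_pow_left₀ (by norm_num : (0:ℝ) ≤ 2) hm2 n
          linarith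
      have hb : (m - 1) ^ (n+1) ≤ m ^ (n+1) := pow_le_pow_left₀ (by linarith) (by linarith) _
      exact mul_le_mul ha hb (pow_nonneg (by linarith) _) (by positivity)
    calc (m - c) ^ (n+1) ≤ (2 * m ^ n) * m ^ (n+1) := h5.trans h6
    _ ≤ (m ^ (n+1) - c ^ (n+1)) * m ^ (n+1) :=
        mul_le_mul_of_nonneg_right h4 (by positivity)
    _ = m ^ (n+1) * (m ^ (n+1) - c ^ (n+1)) := by ring

lemma convex2 (a b : ℝ) (ha : 0 ≤ a) (hb : 0 ≤ b) (d : ℕ) :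
    2 * ((a + b) / 2) ^ d ≤ a ^ d + b ^ d := by
  have h := (convexOn_pow d).2 (Set.mem_Ici.2 ha) (Set.mem_Ici.2 hb)
    (by norm_num : (0:ℝ) ≤ 1/2) (by norm_num : (0:ℝ) ≤ 1/2) (by norm_num)
  simp only [smul_eq_mul] at h
  have e : (a + b) / 2 = 1/2 * a + 1/2 * b := by ring
  rw [e]; linarith

set_option maxHeartbeats 1000000 in
/-- Kernel-distance ball for the polynomial kernel `k(x, x') = (1 + xᵀx')ᵈ`:
if `δ² < k(x,x) + k(x',x')` and the squared kernel distance
`k(x,x) + k(x',x') - 2k(x,x')` is at most `δ²`, then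
`‖x - x'‖₂ ≤ 2^(-1/(2d)) √(2 + ‖x‖₂² + ‖x'‖₂²) · δ^(1/d)`. -/
theorem polynomial_kernel_distance_ball (p : ℕ) (d : ℕ) (hd : 0 < d)
    (x x' : EuclideanSpace ℝ (Fin p)) (δ : ℝ) (hδ : 0 < δ)
    (h1 : δ ^ 2 < (1 + (inner ℝ x x : ℝ)) ^ d + (1 + (inner ℝ x' x' : ℝ)) ^ d)
    (h2 : (1 + (inner ℝ x x : ℝ)) ^ d + (1 + (inner ℝ x' x' : ℝ)) ^ d
        - 2 * (1 + (inner ℝ x x' : ℝ)) ^ d ≤ δ ^ 2) :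
    ‖x - x'‖ ≤ (2 : ℝ) ^ (-(1 : ℝ) / (2 * d)) *
      Real.sqrt (2 + ‖x‖ ^ 2 + ‖x'‖ ^ 2) * δ ^ ((1 : ℝ) / d) := by
  obtain ⟨n, rfl⟩ : ∃ n, d = n + 1 := ⟨d - 1, (Nat.succ_pred_eq_of_pos hd).symm⟩
  have hxx : (inner ℝ x x : ℝ) = ‖x‖ ^ 2 := real_inner_self_eq_norm_sq x
  have hxx' : (inner ℝ x' x' : ℝ) = ‖x'‖ ^ 2 := real_inner_self_eq_norm_sq x'
  set m : ℝ := (2 + ‖x‖ ^ 2 + ‖x'‖ ^ 2) / 2 with hm_def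
  set c : ℝ := 1 + (inner ℝ x x' : ℝ) with hc_def
  have hx0 : (0:ℝ) ≤ ‖x‖ ^ 2 := by positivity
  have hx0' : (0:ℝ) ≤ ‖x'‖ ^ 2 := by positivity
  have hm1 : 1 ≤ m := by rw [hm_def]; linarith
  have hsub : ‖x - x'‖ ^ 2 = ‖x‖ ^ 2 - 2 * (inner ℝ x x' : ℝ) + ‖x'‖ ^ 2 :=
    norm_sub_sq_real x x'
  have hadd : ‖x + x'‖ ^ 2 = ‖x‖ ^ 2 + 2 * (inner ℝ x x' : ℝ) + ‖x'‖ ^ 2 :=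
    norm_add_sq_real x x'
  have hns : ‖x - x'‖ ^ 2 = 2 * (m - c) := by
    rw [hsub, hm_def, hc_def]; ring
  have hhi : c ≤ m := by linarith [sq_nonneg ‖x - x'‖, hsub]
  have hlo : 2 - m ≤ c := by linarith [sq_nonneg ‖x + x'‖, hadd]
  have hconv : 2 * m ^ (n+1) ≤ (1 + ‖x‖ ^ 2) ^ (n+1) + (1 + ‖x'‖ ^ 2) ^ (n+1) := by
    have h := convex2 (1 + ‖x‖ ^ 2) (1 + ‖x'‖ ^ 2) (by linarith) (by linarith) (n+1)
    have e : (1 + ‖x‖ ^ 2 + (1 + ‖x'‖ ^ 2)) / 2 = m := by rw [hm_def]; ring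
    rwa [e] at h
  rw [hxx, hxx'] at h2
  have hDle : m ^ (n+1) - c ^ (n+1) ≤ δ ^ 2 / 2 := by linarith
  have hkey := key_pow m c n hm1 hlo hhi
  have hmp : (0:ℝ) ≤ m ^ (n+1) := by positivity
  have hfin : (m - c) ^ (n+1) ≤ m ^ (n+1) * (δ ^ 2 / 2) :=
    hkey.trans (mul_le_mul_of_nonneg_left hDle hmp)
  have hmc0 : (0:ℝ) ≤ m - c := by linarith
  set e : ℝ := ((n+1 : ℕ) : ℝ) with he_def
  have he0 : (0:ℝ) < e := by rw [he_def]; positivity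
  have step := Real.rpow_le_rpow (pow_nonneg hmc0 _) hfin
    (by positivity : (0:ℝ) ≤ e⁻¹)
  rw [he_def] at step
  rw [Real.pow_rpow_inv_natCast hmc0 (Nat.succ_ne_zero n),
    Real.mul_rpow hmp (by positivity),
    Real.pow_rpow_inv_natCast (by linarith : (0:ℝ) ≤ m) (Nat.succ_ne_zero n)] at step
  rw [← he_def] at step
  -- step : m - c ≤ m * (δ ^ 2 / 2) ^ e⁻¹
  have hsplit : (δ ^ 2 / 2 : ℝ) ^ (e⁻¹ : ℝ) = δ ^ ((2:ℝ)/e) * (2:ℝ) ^ (-(1:ℝ)/e) := by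
    have e1 : (δ ^ 2 / 2 : ℝ) = δ ^ (2:ℕ) * 2⁻¹ := by ring
    rw [e1, Real.mul_rpow (by positivity) (by norm_num),
      ← Real.rpow_natCast δ 2, ← Real.rpow_mul hδ.le,
      Real.inv_rpow (by norm_num), ← Real.rpow_neg (by norm_num)]
    norm_num
    rw [div_eq_mul_inv, neg_div, one_div]
  rw [hsplit] at step
  -- now compare squares
  set R : ℝ := (2 : ℝ) ^ (-(1 : ℝ) / (2 * e)) * Real.sqrt (2 + ‖x‖ ^ 2 + ‖x'‖ ^ 2) *
      δ ^ ((1 : ℝ) / e) with hR_def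
  have hRnn : 0 ≤ R := by rw [hR_def]; positivity
  have hRsq : R ^ 2 = (2:ℝ) ^ (-(1:ℝ)/e) * (2 * m) * δ ^ ((2:ℝ)/e) := by
    rw [hR_def, mul_pow, mul_pow,
      ← Real.rpow_natCast ((2:ℝ) ^ (-(1:ℝ)/(2*e))) 2, ← Real.rpow_mul (by norm_num),
      ← Real.rpow_natCast (δ ^ ((1:ℝ)/e)) 2, ← Real.rpow_mul hδ.le,
      Real.sq_sqrt (by linarith : (0:ℝ) ≤ 2 + ‖x‖ ^ 2 + ‖x'‖ ^ 2)]
    have e1 : -(1:ℝ)/(2*e) * (2:ℕ) = -(1:ℝ)/e := by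
      push_cast; field_simp
    have e2 : (1:ℝ)/e * (2:ℕ) = (2:ℝ)/e := by push_cast; ring
    rw [e1, e2, hm_def]; ring
  have hsq : ‖x - x'‖ ^ 2 ≤ R ^ 2 := by
    rw [hns, hRsq]
    have e3 : (2:ℝ) ^ (-(1:ℝ)/e) * (2 * m) * δ ^ ((2:ℝ)/e)
        = 2 * (m * (δ ^ ((2:ℝ)/e) * (2:ℝ) ^ (-(1:ℝ)/e))) := by ring
    rw [e3]; linarith [step]
  calc ‖x - x'‖ = Real.sqrt (‖x - x'‖ ^ 2) := (Real.sqrt_sq (norm_nonneg _)).symm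
  _ ≤ Real.sqrt (R ^ 2) := Real.sqrt_le_sqrt hsq
  _ = R := Real.sqrt_sq hRnn
end

section
/- For all x, x' ∈ ℝᵖ, (√(1 + ‖x‖₂²) − √(1 + ‖x'‖₂²))² ≤ 2·‖x − x'‖₂²·(‖x‖₂² + ‖x'‖₂²)/(2 + ‖x‖₂² + ‖x'‖₂²). -/
lemma sqrt_one_add_sq_diff_bound_aux (a b c : ℝ) (ha : 0 ≤ a) (hb : 0 ≤ b)
    (habc : |a - b| ≤ c) :
    (Real.sqrt (1 + a ^ 2) - Real.sqrt (1 + b ^ 2)) ^ 2 ≤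
      2 * c ^ 2 * (a ^ 2 + b ^ 2) / (2 + a ^ 2 + b ^ 2) := by
  set sA := Real.sqrt (1 + a ^ 2) with hA
  set sB := Real.sqrt (1 + b ^ 2) with hB
  have hsA : sA ^ 2 = 1 + a ^ 2 := Real.sq_sqrt (by positivity)
  have hsB : sB ^ 2 = 1 + b ^ 2 := Real.sq_sqrt (by positivity)
  have hsA0 : 0 ≤ sA := Real.sqrt_nonneg _
  have hsB0 : 0 ≤ sB := Real.sqrt_nonneg _
  have hab : (a - b) ^ 2 ≤ c ^ 2 := by
    have := sq_abs (a - b)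
    nlinarith [abs_nonneg (a - b), habc]
  have hD : (0:ℝ) < 2 + a ^ 2 + b ^ 2 := by positivity
  rw [le_div_iff₀ hD]
  have hs : 2 + a ^ 2 + b ^ 2 ≤ (sA + sB) ^ 2 := by
    nlinarith [mul_nonneg hsA0 hsB0]
  have h1 : (sA - sB) ^ 2 * (2 + a ^ 2 + b ^ 2) ≤ (sA - sB) ^ 2 * (sA + sB) ^ 2 :=
    mul_le_mul_of_nonneg_left hs (sq_nonneg _)
  have h2 : (sA - sB) ^ 2 * (sA + sB) ^ 2 = (a ^ 2 - b ^ 2) ^ 2 := by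
    have : (sA - sB) ^ 2 * (sA + sB) ^ 2 = (sA ^ 2 - sB ^ 2) ^ 2 := by ring
    rw [this, hsA, hsB]; ring
  have h3 : (a ^ 2 - b ^ 2) ^ 2 ≤ 2 * c ^ 2 * (a ^ 2 + b ^ 2) := by
    nlinarith [mul_le_mul_of_nonneg_right hab (sq_nonneg (a + b)),
      mul_nonneg (sq_nonneg c) (sq_nonneg (a - b))]
  linarith [h1, h2 ▸ h1]

/-- For all `x, x' ∈ ℝᵖ`,
`(√(1 + ‖x‖₂²) - √(1 + ‖x'‖₂²))² ≤ 2‖x - x'‖₂²(‖x‖₂² + ‖x'‖₂²)/(2 + ‖x‖₂² + ‖x'‖₂²)`. -/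
theorem sqrt_one_add_sq_diff_bound (p : ℕ) (x x' : EuclideanSpace ℝ (Fin p)) :
    (Real.sqrt (1 + ‖x‖ ^ 2) - Real.sqrt (1 + ‖x'‖ ^ 2)) ^ 2 ≤
      2 * ‖x - x'‖ ^ 2 * (‖x‖ ^ 2 + ‖x'‖ ^ 2) / (2 + ‖x‖ ^ 2 + ‖x'‖ ^ 2) := by
  exact sqrt_one_add_sq_diff_bound_aux _ _ _ (norm_nonneg x) (norm_nonneg x')
    (abs_norm_sub_norm_le x x')
end
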